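/- Line-search contraction bound for the damped Gauss–Newton step: for 0 < α ≤ 1, if ‖G((DF(q₀ + tαΔq) − DF(q₀))(Δq))‖ ≤ ω·t·α·‖Δq‖² for all t ∈ [0,1] and some ω ≥ 0, then ‖G(F(q₀ + αΔq))‖ ≤ (1 − α)‖Δq‖ + (ω α²/2)‖Δq‖²; equivalently, L(q₀ + αΔq) ≤ (1 − α + (ω α²/2)‖Δq‖)² · L(q₀). -/

import Mathlib

set_option maxHeartbeats 1000000


/-- Line-search contraction bound for the damped Gauss–Newton step with the
natural level function `L(q) = ½‖G(F(q))‖²` and increment `Δq = -G(F(q₀))`. -/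
theorem gauss_newton_line_search_contraction
    (n m : ℕ) (hn : 0 < n) (hm : 0 < m)
    (F : EuclideanSpace ℝ (Fin n) → EuclideanSpace ℝ (Fin m))
    (hF : ContDiff ℝ 1 F)
    (q₀ : EuclideanSpace ℝ (Fin n))
    (G : EuclideanSpace ℝ (Fin m) →L[ℝ] EuclideanSpace ℝ (Fin n))
    (hG : G.comp (fderiv ℝ F q₀) = ContinuousLinearMap.id ℝ (EuclideanSpace ℝ (Fin n)))
    (Δq : EuclideanSpace ℝ (Fin n)) (hΔq : Δq = -(G (F q₀)))
    (L : EuclideanSpace ℝ (Fin n) → ℝ)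
    (hL : ∀ q, L q = (1 / 2) * ‖G (F q)‖ ^ 2)
    (α : ℝ) (hα₀ : 0 < α) (hα₁ : α ≤ 1)
    (ω : ℝ) (hω : 0 ≤ ω)
    (hbound : ∀ t ∈ Set.Icc (0 : ℝ) 1,
      ‖G ((fderiv ℝ F (q₀ + (t * α) • Δq) - fderiv ℝ F q₀) Δq)‖ ≤
        ω * t * α * ‖Δq‖ ^ 2) :
    ‖G (F (q₀ + α • Δq))‖ ≤ (1 - α) * ‖Δq‖ + (ω * α ^ 2 / 2) * ‖Δq‖ ^ 2 ∧
      L (q₀ + α • Δq) ≤ (1 - α + (ω * α ^ 2 / 2) * ‖Δq‖) ^ 2 * L q₀ := by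
  have hFd : Differentiable ℝ F := hF.differentiable one_ne_zero
  set e : ℝ → EuclideanSpace ℝ (Fin n) := fun t =>
    G ((fderiv ℝ F (q₀ + (t * α) • Δq) - fderiv ℝ F q₀) Δq) with he
  have hpath : ∀ t : ℝ, HasDerivAt (fun s : ℝ => q₀ + (s * α) • Δq) (α • Δq) t := by
    intro t
    have h1 : HasDerivAt (fun s : ℝ => s * α) α t := by
      simpa using (hasDerivAt_id t).mul_const α
    have h2 := h1.smul_const Δq
    simpa using h2.const_add q₀
  have hφ : ∀ t : ℝ, HasDerivAt (fun s => G (F (q₀ + (s * α) • Δq)))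
      (α • G ((fderiv ℝ F (q₀ + (t * α) • Δq)) Δq)) t := by
    intro t
    have hF' := (hFd (q₀ + (t * α) • Δq)).hasFDerivAt
    have := (G.hasFDerivAt.comp _ hF').comp_hasDerivAt t (hpath t)
    simpa [map_smul, Function.comp_def] using this
  have hc1 : Continuous fun t : ℝ => q₀ + (t * α) • Δq := by continuity
  have hc2 : Continuous fun t : ℝ => fderiv ℝ F (q₀ + (t * α) • Δq) :=
    (hF.continuous_fderiv one_ne_zero).comp hc1
  have hcont : Continuous fun t : ℝ => α • G ((fderiv ℝ F (q₀ + (t * α) • Δq)) Δq) :=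
    (G.continuous.comp (hc2.clm_apply continuous_const)).const_smul α
  have hint : (∫ t in (0:ℝ)..1, α • G ((fderiv ℝ F (q₀ + (t * α) • Δq)) Δq))
      = G (F (q₀ + α • Δq)) - G (F q₀) := by
    have := intervalIntegral.integral_eq_sub_of_hasDerivAt
      (f := fun s => G (F (q₀ + (s * α) • Δq))) (fun t _ => hφ t)
      (hcont.intervalIntegrable 0 1)
    simpa using this
  have hGid : G ((fderiv ℝ F q₀) Δq) = Δq := by
    have := DFunLike.congr_fun hG Δq
    simpa using this
  have hecont : Continuous e := by
    apply G.continuous.comp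
    exact (hc2.sub continuous_const).clm_apply continuous_const
  have hsplit : ∀ t : ℝ, α • G ((fderiv ℝ F (q₀ + (t * α) • Δq)) Δq)
      = α • Δq + α • e t := by
    intro t
    simp only [he, ContinuousLinearMap.sub_apply, map_sub, hGid]
    module
  have hint2 : (∫ t in (0:ℝ)..1, α • G ((fderiv ℝ F (q₀ + (t * α) • Δq)) Δq))
      = α • Δq + α • ∫ t in (0:ℝ)..1, e t := by
    simp only [hsplit]
    rw [intervalIntegral.integral_add (g := fun t => α • e t) (intervalIntegrable_const)
      ((hecont.const_smul α).intervalIntegrable 0 1)]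
    simp [intervalIntegral.integral_smul]
  have hI : ‖∫ t in (0:ℝ)..1, e t‖ ≤ ω * α * ‖Δq‖^2 / 2 := by
    have hb2 : ∀ᵐ t ∂(MeasureTheory.volume.restrict (Set.uIoc (0:ℝ) 1)),
        ‖e t‖ ≤ ω * α * ‖Δq‖^2 * t := by
      filter_upwards [MeasureTheory.ae_restrict_mem measurableSet_uIoc] with t ht
      have ht' : t ∈ Set.Icc (0:ℝ) 1 := by
        rw [Set.uIoc_of_le zero_le_one] at ht
        exact Set.Ioc_subset_Icc_self ht
      calc ‖e t‖ ≤ ω * t * α * ‖Δq‖ ^ 2 := hbound t ht'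
        _ = ω * α * ‖Δq‖^2 * t := by ring
    have hval : (∫ t in (0:ℝ)..1, ω * α * ‖Δq‖^2 * t) = ω * α * ‖Δq‖^2 / 2 := by
      rw [intervalIntegral.integral_const_mul, integral_id]; ring
    calc ‖∫ t in (0:ℝ)..1, e t‖
        ≤ |∫ t in (0:ℝ)..1, ω * α * ‖Δq‖^2 * t| :=
          intervalIntegral.norm_integral_le_abs_of_norm_le hb2
            ((continuous_const.mul continuous_id).intervalIntegrable 0 1)
      _ = ω * α * ‖Δq‖^2 / 2 := by rw [hval, abs_of_nonneg]; positivity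
  -- main identity
  have hmain : G (F (q₀ + α • Δq)) = (α - 1) • Δq + α • ∫ t in (0:ℝ)..1, e t := by
    have h := hint.symm.trans hint2
    have hq : G (F q₀) = -Δq := by rw [hΔq]; simp
    rw [hq] at h
    rw [sub_eq_iff_eq_add.mp h]
    module
  set I := ∫ t in (0:ℝ)..1, e t with hIdef
  have h1 : ‖G (F (q₀ + α • Δq))‖ ≤ (1 - α) * ‖Δq‖ + (ω * α ^ 2 / 2) * ‖Δq‖ ^ 2 := by
    rw [hmain]
    have habs : |α - 1| = 1 - α := by rw [abs_of_nonpos (by linarith)]; ring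
    calc ‖(α - 1) • Δq + α • I‖ ≤ ‖(α - 1) • Δq‖ + ‖α • I‖ := norm_add_le _ _
      _ = (1 - α) * ‖Δq‖ + α * ‖I‖ := by
          rw [norm_smul, norm_smul, Real.norm_eq_abs, Real.norm_eq_abs, habs,
            abs_of_pos hα₀]
      _ ≤ (1 - α) * ‖Δq‖ + α * (ω * α * ‖Δq‖^2 / 2) := by
          have := mul_le_mul_of_nonneg_left hI hα₀.le
          linarith
      _ = (1 - α) * ‖Δq‖ + (ω * α ^ 2 / 2) * ‖Δq‖ ^ 2 := by ring
  refine ⟨h1, ?_⟩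
  have hnΔ : ‖G (F q₀)‖ = ‖Δq‖ := by rw [hΔq, norm_neg]
  rw [hL, hL, hnΔ]
  have hx := norm_nonneg (G (F (q₀ + α • Δq)))
  nlinarith [h1, norm_nonneg Δq, sq_nonneg (‖Δq‖), mul_nonneg hω (norm_nonneg Δq)]
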